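/- Let G be a g-dimensional vector space over ℂ and S the polynomial ring on G* ⊕ Λ²G*. Then the intersection of the vanishing ideal of the linear subspace P(Λ²G*) (i.e., the ideal generated by the linear forms in G*) with the Plücker ideal of the Grassmannian G(ℂ ⊕ G*, 2) (generated by Λ³G* ⊕ Λ⁴G* ⊆ S²(G* ⊕ Λ²G*)) equals the ideal generated by Λ³G* alone. -/
import Mathlib


/-! We model `S = Sym(G* ⊕ Λ²G*)` for a `g`-dimensional space `G` in Plücker coordinates:
`Λ²(ℂ ⊕ G*) = G* ⊕ Λ²G*`, so `S` is the polynomial ring in variables `p_{ab}` indexed by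
pairs `a < b` in `Fin (g+1)` (index `0` corresponding to the `ℂ`-summand of `ℂ ⊕ G*`);
the variables `p_{0j}` form a basis of `G*` and the `p_{ij}` with `0 < i < j` a basis of
`Λ²G*`.  The Plücker ideal of `G(ℂ ⊕ G*, 2)` is generated by the 4×4 Pfaffians
`p_{ab}p_{cd} − p_{ac}p_{bd} + p_{ad}p_{bc}` (`a<b<c<d`); those with `a = 0` span the copy
of `Λ³G*` and the others the copy of `Λ⁴G*`. -/

abbrev PluckerIndex (g : ℕ) := {q : Fin (g + 1) × Fin (g + 1) // q.1 < q.2}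

/-- The 4×4 Pfaffian `p_{ab}p_{cd} − p_{ac}p_{bd} + p_{ad}p_{bc}`. -/
noncomputable def pfaff (g : ℕ) (a b c d : Fin (g + 1))
    (hab : a < b) (hbc : b < c) (hcd : c < d) : MvPolynomial (PluckerIndex g) ℂ :=
  MvPolynomial.X ⟨(a, b), hab⟩ * MvPolynomial.X ⟨(c, d), hcd⟩
    - MvPolynomial.X ⟨(a, c), hab.trans hbc⟩ * MvPolynomial.X ⟨(b, d), hbc.trans hcd⟩
    + MvPolynomial.X ⟨(a, d), (hab.trans hbc).trans hcd⟩ * MvPolynomial.X ⟨(b, c), hbc⟩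

/-- Abbreviation for a Plücker variable. -/
noncomputable def XX (g : ℕ) (i j : Fin (g + 1)) (h : i < j) :
    MvPolynomial (PluckerIndex g) ℂ :=
  MvPolynomial.X ⟨(i, j), h⟩

lemma half_mem {σ : Type} {J : Ideal (MvPolynomial σ ℂ)} {x : MvPolynomial σ ℂ}
    (h : 2 * x ∈ J) : x ∈ J := by
  have h2 := J.mul_mem_left (MvPolynomial.C (2⁻¹ : ℂ)) h
  rwa [show (MvPolynomial.C (2⁻¹ : ℂ) : MvPolynomial σ ℂ) * (2 * x) = x from by
    rw [← mul_assoc, show ((2 : MvPolynomial σ ℂ)) = MvPolynomial.C (2 : ℂ) from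
      (by exact_mod_cast (map_ofNat (MvPolynomial.C : ℂ →+* MvPolynomial σ ℂ) 2).symm),
      ← MvPolynomial.C_mul]
    norm_num] at h2

lemma key (g : ℕ) (e a b c d : Fin (g + 1)) (h0e : (0 : Fin (g + 1)) < e)
    (h0a : (0 : Fin (g + 1)) < a) (hab : a < b) (hbc : b < c) (hcd : c < d) :
    MvPolynomial.X ⟨(0, e), h0e⟩ * pfaff g a b c d hab hbc hcd ∈
      Ideal.span {f | ∃ (b c d : Fin (g + 1))
        (h0b : (0 : Fin (g + 1)) < b) (hbc : b < c) (hcd : c < d),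
        f = pfaff g 0 b c d h0b hbc hcd} := by
  have hg : ∀ (x y z : Fin (g + 1)) (h1 : (0 : Fin (g + 1)) < x) (h2 : x < y) (h3 : y < z),
      pfaff g 0 x y z h1 h2 h3 ∈ Ideal.span {f | ∃ (b c d : Fin (g + 1))
        (h0b : (0 : Fin (g + 1)) < b) (hbc : b < c) (hcd : c < d),
        f = pfaff g 0 b c d h0b hbc hcd} :=
    fun x y z h1 h2 h3 => Ideal.subset_span ⟨x, y, z, h1, h2, h3, rfl⟩
  show XX g 0 e h0e * pfaff g a b c d hab hbc hcd ∈ _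
  rcases lt_trichotomy e a with h1 | h1 | h1
  · apply half_mem
    have hid : (2 : MvPolynomial (PluckerIndex g) ℂ) * (XX g 0 e h0e * pfaff g a b c d hab hbc hcd) =
        XX g e b (by omega) * pfaff g 0 a c d (by omega) (by omega) (by omega)
        - XX g e a (by omega) * pfaff g 0 b c d (by omega) (by omega) (by omega)
        - XX g e c (by omega) * pfaff g 0 a b d (by omega) (by omega) (by omega)
        + XX g e d (by omega) * pfaff g 0 a b c (by omega) (by omega) (by omega)
        + XX g a b (by omega) * pfaff g 0 e c d (by omega) (by omega) (by omega)
        - XX g a c (by omega) * pfaff g 0 e b d (by omega) (by omega) (by omega)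
        + XX g a d (by omega) * pfaff g 0 e b c (by omega) (by omega) (by omega)
        + XX g b c (by omega) * pfaff g 0 e a d (by omega) (by omega) (by omega)
        - XX g b d (by omega) * pfaff g 0 e a c (by omega) (by omega) (by omega)
        + XX g c d (by omega) * pfaff g 0 e a b (by omega) (by omega) (by omega) := by
      simp only [XX, pfaff]; ring
    rw [hid]
    exact (add_mem (sub_mem (add_mem (add_mem (sub_mem (add_mem (add_mem (sub_mem (sub_mem (Ideal.mul_mem_left _ _ (hg _ _ _ _ _ _)) (Ideal.mul_mem_left _ _ (hg _ _ _ _ _ _))) (Ideal.mul_mem_left _ _ (hg _ _ _ _ _ _))) (Ideal.mul_mem_left _ _ (hg _ _ _ _ _ _))) (Ideal.mul_mem_left _ _ (hg _ _ _ _ _ _))) (Ideal.mul_mem_left _ _ (hg _ _ _ _ _ _))) (Ideal.mul_mem_left _ _ (hg _ _ _ _ _ _))) (Ideal.mul_mem_left _ _ (hg _ _ _ _ _ _))) (Ideal.mul_mem_left _ _ (hg _ _ _ _ _ _))) (Ideal.mul_mem_left _ _ (hg _ _ _ _ _ _)))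
  · subst h1
    have hid : XX g 0 e h0e * pfaff g e b c d hab hbc hcd =
        XX g e b (by omega) * pfaff g 0 e c d (by omega) (by omega) (by omega)
        - XX g e c (by omega) * pfaff g 0 e b d (by omega) (by omega) (by omega)
        + XX g e d (by omega) * pfaff g 0 e b c (by omega) (by omega) (by omega) := by
      simp only [XX, pfaff]; ring
    rw [hid]
    exact (add_mem (sub_mem (Ideal.mul_mem_left _ _ (hg _ _ _ _ _ _)) (Ideal.mul_mem_left _ _ (hg _ _ _ _ _ _))) (Ideal.mul_mem_left _ _ (hg _ _ _ _ _ _)))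
  · rcases lt_trichotomy e b with h2 | h2 | h2
    · apply half_mem
      have hid : (2 : MvPolynomial (PluckerIndex g) ℂ) * (XX g 0 e h0e * pfaff g a b c d hab hbc hcd) =
          XX g a e (by omega) * pfaff g 0 b c d (by omega) (by omega) (by omega)
          + XX g a b (by omega) * pfaff g 0 e c d (by omega) (by omega) (by omega)
          - XX g a c (by omega) * pfaff g 0 e b d (by omega) (by omega) (by omega)
          + XX g a d (by omega) * pfaff g 0 e b c (by omega) (by omega) (by omega)
          + XX g e b (by omega) * pfaff g 0 a c d (by omega) (by omega) (by omega)
          - XX g e c (by omega) * pfaff g 0 a b d (by omega) (by omega) (by omega)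
          + XX g e d (by omega) * pfaff g 0 a b c (by omega) (by omega) (by omega)
          - XX g b c (by omega) * pfaff g 0 a e d (by omega) (by omega) (by omega)
          + XX g b d (by omega) * pfaff g 0 a e c (by omega) (by omega) (by omega)
          - XX g c d (by omega) * pfaff g 0 a e b (by omega) (by omega) (by omega) := by
        simp only [XX, pfaff]; ring
      rw [hid]
      exact (sub_mem (add_mem (sub_mem (add_mem (sub_mem (add_mem (add_mem (sub_mem (add_mem (Ideal.mul_mem_left _ _ (hg _ _ _ _ _ _)) (Ideal.mul_mem_left _ _ (hg _ _ _ _ _ _))) (Ideal.mul_mem_left _ _ (hg _ _ _ _ _ _))) (Ideal.mul_mem_left _ _ (hg _ _ _ _ _ _))) (Ideal.mul_mem_left _ _ (hg _ _ _ _ _ _))) (Ideal.mul_mem_left _ _ (hg _ _ _ _ _ _))) (Ideal.mul_mem_left _ _ (hg _ _ _ _ _ _))) (Ideal.mul_mem_left _ _ (hg _ _ _ _ _ _))) (Ideal.mul_mem_left _ _ (hg _ _ _ _ _ _))) (Ideal.mul_mem_left _ _ (hg _ _ _ _ _ _)))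
    · subst h2
      have hid : XX g 0 e h0e * pfaff g a e c d hab hbc hcd =
          XX g a e (by omega) * pfaff g 0 e c d (by omega) (by omega) (by omega)
          - XX g e c (by omega) * pfaff g 0 a e d (by omega) (by omega) (by omega)
          + XX g e d (by omega) * pfaff g 0 a e c (by omega) (by omega) (by omega) := by
        simp only [XX, pfaff]; ring
      rw [hid]
      exact (add_mem (sub_mem (Ideal.mul_mem_left _ _ (hg _ _ _ _ _ _)) (Ideal.mul_mem_left _ _ (hg _ _ _ _ _ _))) (Ideal.mul_mem_left _ _ (hg _ _ _ _ _ _)))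
    · rcases lt_trichotomy e c with h3 | h3 | h3
      · apply half_mem
        have hid : (2 : MvPolynomial (PluckerIndex g) ℂ) * (XX g 0 e h0e * pfaff g a b c d hab hbc hcd) =
            XX g a b (by omega) * pfaff g 0 e c d (by omega) (by omega) (by omega)
            + XX g a e (by omega) * pfaff g 0 b c d (by omega) (by omega) (by omega)
            + XX g a c (by omega) * pfaff g 0 b e d (by omega) (by omega) (by omega)
            - XX g a d (by omega) * pfaff g 0 b e c (by omega) (by omega) (by omega)
            - XX g b e (by omega) * pfaff g 0 a c d (by omega) (by omega) (by omega)
            - XX g b c (by omega) * pfaff g 0 a e d (by omega) (by omega) (by omega)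
            + XX g b d (by omega) * pfaff g 0 a e c (by omega) (by omega) (by omega)
            - XX g e c (by omega) * pfaff g 0 a b d (by omega) (by omega) (by omega)
            + XX g e d (by omega) * pfaff g 0 a b c (by omega) (by omega) (by omega)
            + XX g c d (by omega) * pfaff g 0 a b e (by omega) (by omega) (by omega) := by
          simp only [XX, pfaff]; ring
        rw [hid]
        exact (add_mem (add_mem (sub_mem (add_mem (sub_mem (sub_mem (sub_mem (add_mem (add_mem (Ideal.mul_mem_left _ _ (hg _ _ _ _ _ _)) (Ideal.mul_mem_left _ _ (hg _ _ _ _ _ _))) (Ideal.mul_mem_left _ _ (hg _ _ _ _ _ _))) (Ideal.mul_mem_left _ _ (hg _ _ _ _ _ _))) (Ideal.mul_mem_left _ _ (hg _ _ _ _ _ _))) (Ideal.mul_mem_left _ _ (hg _ _ _ _ _ _))) (Ideal.mul_mem_left _ _ (hg _ _ _ _ _ _))) (Ideal.mul_mem_left _ _ (hg _ _ _ _ _ _))) (Ideal.mul_mem_left _ _ (hg _ _ _ _ _ _))) (Ideal.mul_mem_left _ _ (hg _ _ _ _ _ _)))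
      · subst h3
        have hid : XX g 0 e h0e * pfaff g a b e d hab hbc hcd =
            XX g a e (by omega) * pfaff g 0 b e d (by omega) (by omega) (by omega)
            - XX g b e (by omega) * pfaff g 0 a e d (by omega) (by omega) (by omega)
            + XX g e d (by omega) * pfaff g 0 a b e (by omega) (by omega) (by omega) := by
          simp only [XX, pfaff]; ring
        rw [hid]
        exact (add_mem (sub_mem (Ideal.mul_mem_left _ _ (hg _ _ _ _ _ _)) (Ideal.mul_mem_left _ _ (hg _ _ _ _ _ _))) (Ideal.mul_mem_left _ _ (hg _ _ _ _ _ _)))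
      · rcases lt_trichotomy e d with h4 | h4 | h4
        · apply half_mem
          have hid : (2 : MvPolynomial (PluckerIndex g) ℂ) * (XX g 0 e h0e * pfaff g a b c d hab hbc hcd) =
              XX g a c (by omega) * pfaff g 0 b e d (by omega) (by omega) (by omega)
              - XX g a b (by omega) * pfaff g 0 c e d (by omega) (by omega) (by omega)
              + XX g a e (by omega) * pfaff g 0 b c d (by omega) (by omega) (by omega)
              + XX g a d (by omega) * pfaff g 0 b c e (by omega) (by omega) (by omega)
              - XX g b c (by omega) * pfaff g 0 a e d (by omega) (by omega) (by omega)
              - XX g b e (by omega) * pfaff g 0 a c d (by omega) (by omega) (by omega)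
              - XX g b d (by omega) * pfaff g 0 a c e (by omega) (by omega) (by omega)
              + XX g c e (by omega) * pfaff g 0 a b d (by omega) (by omega) (by omega)
              + XX g c d (by omega) * pfaff g 0 a b e (by omega) (by omega) (by omega)
              + XX g e d (by omega) * pfaff g 0 a b c (by omega) (by omega) (by omega) := by
            simp only [XX, pfaff]; ring
          rw [hid]
          exact (add_mem (add_mem (add_mem (sub_mem (sub_mem (sub_mem (add_mem (add_mem (sub_mem (Ideal.mul_mem_left _ _ (hg _ _ _ _ _ _)) (Ideal.mul_mem_left _ _ (hg _ _ _ _ _ _))) (Ideal.mul_mem_left _ _ (hg _ _ _ _ _ _))) (Ideal.mul_mem_left _ _ (hg _ _ _ _ _ _))) (Ideal.mul_mem_left _ _ (hg _ _ _ _ _ _))) (Ideal.mul_mem_left _ _ (hg _ _ _ _ _ _))) (Ideal.mul_mem_left _ _ (hg _ _ _ _ _ _))) (Ideal.mul_mem_left _ _ (hg _ _ _ _ _ _))) (Ideal.mul_mem_left _ _ (hg _ _ _ _ _ _))) (Ideal.mul_mem_left _ _ (hg _ _ _ _ _ _)))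
        · subst h4
          have hid : XX g 0 e h0e * pfaff g a b c e hab hbc hcd =
              XX g a e (by omega) * pfaff g 0 b c e (by omega) (by omega) (by omega)
              - XX g b e (by omega) * pfaff g 0 a c e (by omega) (by omega) (by omega)
              + XX g c e (by omega) * pfaff g 0 a b e (by omega) (by omega) (by omega) := by
            simp only [XX, pfaff]; ring
          rw [hid]
          exact (add_mem (sub_mem (Ideal.mul_mem_left _ _ (hg _ _ _ _ _ _)) (Ideal.mul_mem_left _ _ (hg _ _ _ _ _ _))) (Ideal.mul_mem_left _ _ (hg _ _ _ _ _ _)))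
        · apply half_mem
          have hid : (2 : MvPolynomial (PluckerIndex g) ℂ) * (XX g 0 e h0e * pfaff g a b c d hab hbc hcd) =
              XX g a b (by omega) * pfaff g 0 c d e (by omega) (by omega) (by omega)
              - XX g a c (by omega) * pfaff g 0 b d e (by omega) (by omega) (by omega)
              + XX g a d (by omega) * pfaff g 0 b c e (by omega) (by omega) (by omega)
              + XX g a e (by omega) * pfaff g 0 b c d (by omega) (by omega) (by omega)
              + XX g b c (by omega) * pfaff g 0 a d e (by omega) (by omega) (by omega)
              - XX g b d (by omega) * pfaff g 0 a c e (by omega) (by omega) (by omega)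
              - XX g b e (by omega) * pfaff g 0 a c d (by omega) (by omega) (by omega)
              + XX g c d (by omega) * pfaff g 0 a b e (by omega) (by omega) (by omega)
              + XX g c e (by omega) * pfaff g 0 a b d (by omega) (by omega) (by omega)
              - XX g d e (by omega) * pfaff g 0 a b c (by omega) (by omega) (by omega) := by
            simp only [XX, pfaff]; ring
          rw [hid]
          exact (sub_mem (add_mem (add_mem (sub_mem (sub_mem (add_mem (add_mem (add_mem (sub_mem (Ideal.mul_mem_left _ _ (hg _ _ _ _ _ _)) (Ideal.mul_mem_left _ _ (hg _ _ _ _ _ _))) (Ideal.mul_mem_left _ _ (hg _ _ _ _ _ _))) (Ideal.mul_mem_left _ _ (hg _ _ _ _ _ _))) (Ideal.mul_mem_left _ _ (hg _ _ _ _ _ _))) (Ideal.mul_mem_left _ _ (hg _ _ _ _ _ _))) (Ideal.mul_mem_left _ _ (hg _ _ _ _ _ _))) (Ideal.mul_mem_left _ _ (hg _ _ _ _ _ _))) (Ideal.mul_mem_left _ _ (hg _ _ _ _ _ _))) (Ideal.mul_mem_left _ _ (hg _ _ _ _ _ _)))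

/-- The retraction killing the variables `p_{0j}`. -/
noncomputable def phi (g : ℕ) :
    MvPolynomial (PluckerIndex g) ℂ →ₐ[ℂ] MvPolynomial (PluckerIndex g) ℂ :=
  MvPolynomial.aeval (fun v => if v.1.1 = 0 then 0 else MvPolynomial.X v)

lemma sub_phi_mem_L (g : ℕ) (r : MvPolynomial (PluckerIndex g) ℂ) :
    r - phi g r ∈ Ideal.span {f | ∃ (j : Fin (g + 1)) (h : (0 : Fin (g + 1)) < j),
        f = MvPolynomial.X ⟨(0, j), h⟩} := by
  induction r using MvPolynomial.induction_on with
  | C a => simp [phi]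
  | add p q hp hq =>
      rw [map_add, show p + q - (phi g p + phi g q) = (p - phi g p) + (q - phi g q) from by ring]
      exact add_mem hp hq
  | mul_X p v hp =>
      obtain ⟨⟨i, j⟩, hij⟩ := v
      by_cases hv : i = 0
      · subst hv
        have hX : phi g (MvPolynomial.X ⟨(0, j), hij⟩) = 0 := by simp [phi]
        rw [map_mul, hX, mul_zero, sub_zero]
        exact Ideal.mul_mem_left _ _ (Ideal.subset_span ⟨j, hij, rfl⟩)
      · have hX : phi g (MvPolynomial.X ⟨(i, j), hij⟩) = MvPolynomial.X ⟨(i, j), hij⟩ := by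
          simp [phi, hv]
        rw [map_mul, hX, show p * MvPolynomial.X ⟨(i, j), hij⟩
            - phi g p * MvPolynomial.X ⟨(i, j), hij⟩
            = (p - phi g p) * MvPolynomial.X ⟨(i, j), hij⟩ from by ring]
        exact Ideal.mul_mem_right _ _ hp

/-- in `S = Sym(G* ⊕ Λ²G*)`, the intersection of the vanishing ideal of the
linear subspace `P(Λ²G*)` (the ideal generated by the linear forms in `G*`) with the
Plücker ideal of `G(ℂ ⊕ G*, 2)` (generated by `Λ³G* ⊕ Λ⁴G*`) equals the ideal generated
by `Λ³G*` alone — the second generic syzygy ideal of `G`. -/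
theorem stmt_4 (g : ℕ)
    (L Pl I₁ : Ideal (MvPolynomial (PluckerIndex g) ℂ))
    -- the ideal generated by the linear forms in `G*` :
    (hL : L = Ideal.span {f | ∃ (j : Fin (g + 1)) (h : (0 : Fin (g + 1)) < j),
        f = MvPolynomial.X ⟨(0, j), h⟩})
    -- the Plücker ideal, generated by `Λ³G* ⊕ Λ⁴G* = Λ⁴(ℂ ⊕ G*)` :
    (hPl : Pl = Ideal.span {f | ∃ (a b c d : Fin (g + 1))
        (hab : a < b) (hbc : b < c) (hcd : c < d), f = pfaff g a b c d hab hbc hcd})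
    -- the ideal generated by `Λ³G*` :
    (hI₁ : I₁ = Ideal.span {f | ∃ (b c d : Fin (g + 1))
        (h0b : (0 : Fin (g + 1)) < b) (hbc : b < c) (hcd : c < d),
        f = pfaff g 0 b c d h0b hbc hcd}) :
    L ⊓ Pl = I₁ := by
  subst hL hPl hI₁
  set Lset : Set (MvPolynomial (PluckerIndex g) ℂ) :=
    {f | ∃ (j : Fin (g + 1)) (h : (0 : Fin (g + 1)) < j), f = MvPolynomial.X ⟨(0, j), h⟩}
    with hLset
  set Plset : Set (MvPolynomial (PluckerIndex g) ℂ) :=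
    {f | ∃ (a b c d : Fin (g + 1)) (hab : a < b) (hbc : b < c) (hcd : c < d),
      f = pfaff g a b c d hab hbc hcd} with hPlset
  set Iset : Set (MvPolynomial (PluckerIndex g) ℂ) :=
    {f | ∃ (b c d : Fin (g + 1)) (h0b : (0 : Fin (g + 1)) < b) (hbc : b < c) (hcd : c < d),
      f = pfaff g 0 b c d h0b hbc hcd} with hIset
  -- the main claim: every element of `Pl` is congruent to its `phi`-image mod `I₁`
  have main : ∀ f ∈ Ideal.span Plset,
      f - phi g f ∈ Ideal.span Iset ∧
      ∀ l ∈ Ideal.span Lset, l * phi g f ∈ Ideal.span Iset := by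
    intro f hf
    refine Submodule.span_induction ?_ ?_ ?_ ?_ hf
    · rintro x ⟨a, b, c, d, hab, hbc, hcd, rfl⟩
      by_cases ha : a = 0
      · subst ha
        have hx : phi g (pfaff g 0 b c d hab hbc hcd) = 0 := by
          simp [phi, pfaff]
        rw [hx]
        constructor
        · rw [sub_zero]
          exact Ideal.subset_span ⟨b, c, d, hab, hbc, hcd, rfl⟩
        · intro l _
          rw [mul_zero]; exact zero_mem _
      · have h0a : (0 : Fin (g + 1)) < a := Fin.pos_of_ne_zero ha
        have hx : phi g (pfaff g a b c d hab hbc hcd) = pfaff g a b c d hab hbc hcd := by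
          have hb : ¬ (b = 0) := by omega
          have hc : ¬ (c = 0) := by omega
          simp [phi, pfaff, ha, hb, hc]
        rw [hx]
        refine ⟨by rw [sub_self]; exact zero_mem _, ?_⟩
        intro l hl
        refine Submodule.span_induction ?_ ?_ ?_ ?_ hl
        · rintro x ⟨j, hj, rfl⟩
          exact key g j a b c d hj h0a hab hbc hcd
        · rw [zero_mul]; exact zero_mem _
        · intro x y _ _ hx hy
          rw [add_mul]; exact add_mem hx hy
        · intro r x _ hx
          rw [smul_eq_mul, mul_assoc]
          exact Ideal.mul_mem_left _ _ hx
    · refine ⟨?_, ?_⟩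
      · rw [map_zero, sub_zero]; exact zero_mem _
      · intro l _; rw [map_zero, mul_zero]; exact zero_mem _
    · intro x y _ _ hx hy
      refine ⟨?_, ?_⟩
      · rw [map_add, show x + y - (phi g x + phi g y)
          = (x - phi g x) + (y - phi g y) from by ring]
        exact add_mem hx.1 hy.1
      · intro l hl
        rw [map_add, mul_add]
        exact add_mem (hx.2 l hl) (hy.2 l hl)
    · intro r x _ hx
      rw [smul_eq_mul]
      refine ⟨?_, ?_⟩
      · rw [map_mul, show r * x - phi g r * phi g x
          = r * (x - phi g x) + (r - phi g r) * phi g x from by ring]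
        exact add_mem (Ideal.mul_mem_left _ _ hx.1) (hx.2 _ (sub_phi_mem_L g r))
      · intro l hl
        rw [map_mul, ← mul_assoc]
        exact hx.2 _ (Ideal.mul_mem_right _ _ hl)
  apply le_antisymm
  · rintro f ⟨hfL, hfPl⟩
    have hker : phi g f = 0 := by
      have hsub : Ideal.span Lset ≤ RingHom.ker (phi g).toRingHom := by
        rw [Ideal.span_le]
        rintro x ⟨j, hj, rfl⟩
        simp [RingHom.mem_ker, phi]
      exact hsub hfL
    have h2 := (main f hfPl).1
    rwa [hker, sub_zero] at h2
  · refine le_inf ?_ ?_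
    · rw [Ideal.span_le]
      rintro x ⟨b, c, d, h0b, hbc, hcd, rfl⟩
      show pfaff g 0 b c d h0b hbc hcd ∈ Ideal.span Lset
      rw [show pfaff g 0 b c d h0b hbc hcd
          = MvPolynomial.X ⟨(0, b), h0b⟩ * MvPolynomial.X ⟨(c, d), hcd⟩
            - MvPolynomial.X ⟨(0, c), h0b.trans hbc⟩ * MvPolynomial.X ⟨(b, d), hbc.trans hcd⟩
            + MvPolynomial.X ⟨(0, d), (h0b.trans hbc).trans hcd⟩ * MvPolynomial.X ⟨(b, c), hbc⟩
          from rfl]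
      exact add_mem
        (sub_mem
          (Ideal.mul_mem_right _ _ (Ideal.subset_span ⟨b, h0b, rfl⟩))
          (Ideal.mul_mem_right _ _ (Ideal.subset_span ⟨c, h0b.trans hbc, rfl⟩)))
        (Ideal.mul_mem_right _ _ (Ideal.subset_span ⟨d, (h0b.trans hbc).trans hcd, rfl⟩))
    · rw [Ideal.span_le]
      rintro x ⟨b, c, d, h0b, hbc, hcd, rfl⟩
      exact Ideal.subset_span ⟨0, b, c, d, h0b, hbc, hcd, rfl⟩
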